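/- Let X be a finite set, V a seminormed real vector space, and F a nonempty set of functions X → V whose width w_F(x) := sup_{f,g∈F} ‖f(x) − g(x)‖ satisfies w_F(x) ≤ C for all x ∈ X, where C ≥ 0. Let x₁, …, x_T ∈ X with T = L·τ for positive integers L and τ, set t_k := (k−1)·τ, and let n_t(x) := |{s ∈ {1,…,t−1} : x_s = x}|. Let (d_t)_{t≥1} be a nondecreasing sequence of nonnegative reals and let f̂_t : X → V be arbitrary functions. For each t define the confidence set F_t := { f ∈ F : ‖f(x_i) − f̂_t(x_i)‖ ≤ √( d_t / n_t(x_i) ) for every i ∈ {1,…,t−1} with n_t(x_i) > 0 }. Then Σ_{k=1}^{L} Σ_{i=1}^{τ} w_{F_{t_k}}(x_{t_k+i}) ≤ 4·( τ·C·|X| + 1 ) + 4·√( 2·d_T·|X|·T ). -/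

import Mathlib

open Finset
open scoped Classical

namespace SumWidthsAux

variable {X : Type*} {V : Type*} [SeminormedAddCommGroup V]

noncomputable def nvisit (x : ℕ → X) (t : ℕ) (y : X) : ℕ :=
  ((Finset.Ico 1 t).filter (fun s => x s = y)).card

noncomputable def Ft (F : Set (X → V)) (x : ℕ → X) (d : ℕ → ℝ) (fhat : ℕ → X → V)
    (t : ℕ) : Set (X → V) :=
  {f ∈ F | ∀ i ∈ Finset.Ico 1 t, 0 < nvisit x t (x i) →
      ‖f (x i) - fhat t (x i)‖ ≤ Real.sqrt (d t / (nvisit x t (x i) : ℝ))}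

noncomputable def width (G : Set (X → V)) (y : X) : ℝ :=
  sSup ((fun fg : (X → V) × (X → V) => ‖fg.1 y - fg.2 y‖) '' (G ×ˢ G))

lemma nvisit_mono (x : ℕ → X) {t₁ t₂ : ℕ} (h : t₁ ≤ t₂) (y : X) :
    nvisit x t₁ y ≤ nvisit x t₂ y :=
  Finset.card_le_card (Finset.filter_subset_filter _ (Finset.Ico_subset_Ico_right h))

lemma nvisit_le_add (x : ℕ → X) (t' t : ℕ) (y : X) :
    nvisit x t y ≤ nvisit x t' y + (t - t') := by
  have hsub : (Finset.Ico 1 t).filter (fun s => x s = y) ⊆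
      ((Finset.Ico 1 t').filter (fun s => x s = y)) ∪ Finset.Ico t' t := by
    intro s hs
    rw [Finset.mem_filter, Finset.mem_Ico] at hs
    rw [Finset.mem_union, Finset.mem_filter, Finset.mem_Ico, Finset.mem_Ico]
    rcases lt_or_ge s t' with h | h
    · exact Or.inl ⟨⟨hs.1.1, h⟩, hs.2⟩
    · exact Or.inr ⟨h, hs.1.2⟩
  calc nvisit x t y ≤ _ := Finset.card_le_card hsub
    _ ≤ ((Finset.Ico 1 t').filter (fun s => x s = y)).card + (Finset.Ico t' t).card :=
        Finset.card_union_le _ _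
    _ = nvisit x t' y + (t - t') := by rw [Nat.card_Ico]; rfl

lemma nvisit_lt (x : ℕ → X) {t₁ t₂ : ℕ} (h1 : 1 ≤ t₁) (h : t₁ < t₂) {y : X} (hx : x t₁ = y) :
    nvisit x t₁ y < nvisit x t₂ y := by
  have hmem : t₁ ∈ (Finset.Ico 1 t₂).filter (fun s => x s = y) := by
    rw [Finset.mem_filter, Finset.mem_Ico]; exact ⟨⟨h1, h⟩, hx⟩
  have hnot : t₁ ∉ (Finset.Ico 1 t₁).filter (fun s => x s = y) := by
    rw [Finset.mem_filter, Finset.mem_Ico]; omega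
  have hsub : insert t₁ ((Finset.Ico 1 t₁).filter (fun s => x s = y)) ⊆
      (Finset.Ico 1 t₂).filter (fun s => x s = y) := by
    intro s hs
    rw [Finset.mem_insert] at hs
    rcases hs with rfl | hs
    · exact hmem
    · rw [Finset.mem_filter, Finset.mem_Ico] at hs ⊢
      exact ⟨⟨hs.1.1, hs.1.2.trans h⟩, hs.2⟩
  have := Finset.card_le_card hsub
  rw [Finset.card_insert_of_notMem hnot] at this
  unfold nvisit; omega

lemma nvisit_injOn (x : ℕ → X) (y : X) (s : Finset ℕ)
    (hmem : ∀ t ∈ s, 1 ≤ t ∧ x t = y) :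
    Set.InjOn (fun t => nvisit x t y) (s : Set ℕ) := by
  intro t₁ h₁ t₂ h₂ heq
  by_contra hne
  rcases lt_or_gt_of_ne hne with h | h
  · exact absurd heq (Nat.ne_of_lt (nvisit_lt x (hmem t₁ h₁).1 h (hmem t₁ h₁).2))
  · exact absurd heq.symm (Nat.ne_of_lt (nvisit_lt x (hmem t₂ h₂).1 h (hmem t₂ h₂).2))

lemma Ft_subset (F : Set (X → V)) (x : ℕ → X) (d : ℕ → ℝ) (fhat : ℕ → X → V) (t : ℕ) :
    Ft F x d fhat t ⊆ F := fun _ hf => hf.1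

lemma width_le_of_subset (F : Set (X → V)) (C : ℝ) (hC : 0 ≤ C)
    (hbound : ∀ f ∈ F, ∀ g ∈ F, ∀ y : X, ‖f y - g y‖ ≤ C)
    {G : Set (X → V)} (hG : G ⊆ F) (y : X) : width G y ≤ C := by
  apply Real.sSup_le _ hC
  rintro z ⟨⟨f, g⟩, hfg, rfl⟩
  exact hbound f (hG hfg.1) g (hG hfg.2) y

lemma width_Ft_le (F : Set (X → V)) (x : ℕ → X) (d : ℕ → ℝ) (fhat : ℕ → X → V)
    (t : ℕ) (y : X) (s : ℕ) (hs : s ∈ Finset.Ico 1 t) (hxs : x s = y)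
    (hn : 0 < nvisit x t y) :
    width (Ft F x d fhat t) y ≤ 2 * Real.sqrt (d t / (nvisit x t y : ℝ)) := by
  apply Real.sSup_le _ (by positivity)
  rintro z ⟨⟨f, g⟩, hfg, rfl⟩
  have h1 := hfg.1.2 s hs (by rwa [hxs])
  have h2 := hfg.2.2 s hs (by rwa [hxs])
  rw [hxs] at h1 h2
  calc ‖f y - g y‖ ≤ ‖f y - fhat t y‖ + ‖fhat t y - g y‖ := by
        have := norm_add_le (f y - fhat t y) (fhat t y - g y)
        simpa using this
    _ ≤ Real.sqrt (d t / (nvisit x t y : ℝ)) + Real.sqrt (d t / (nvisit x t y : ℝ)) := by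
        rw [norm_sub_rev (fhat t y)]; exact add_le_add h1 h2
    _ = 2 * Real.sqrt (d t / (nvisit x t y : ℝ)) := by ring

lemma sum_one_div_sqrt_le (n : ℕ) :
    ∑ j ∈ Finset.Icc 1 n, 1 / Real.sqrt j ≤ 2 * Real.sqrt n := by
  induction n with
  | zero => simp
  | succ n ih =>
    rw [Finset.sum_Icc_succ_top (by omega)]
    have hb : (0:ℝ) < Real.sqrt (n+1) := Real.sqrt_pos.mpr (by positivity)
    have h1 : Real.sqrt n ^ 2 = (n:ℝ) := Real.sq_sqrt (by positivity)
    have h2 : Real.sqrt ((n:ℝ)+1) ^ 2 = (n:ℝ)+1 := Real.sq_sqrt (by positivity)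
    have ha : (0:ℝ) ≤ Real.sqrt n := Real.sqrt_nonneg _
    have key : 1 / Real.sqrt ((n:ℝ)+1) ≤ 2 * Real.sqrt ((n:ℝ)+1) - 2 * Real.sqrt n := by
      rw [div_le_iff₀ hb]
      nlinarith [sq_nonneg (Real.sqrt ((n:ℝ)+1) - Real.sqrt n)]
    push_cast
    push_cast at ih
    linarith

set_option maxHeartbeats 1000000 in
theorem main {X : Type*} [Fintype X] {V : Type*} [SeminormedAddCommGroup V]
    (F : Set (X → V))
    (C : ℝ) (hC : 0 ≤ C)
    (hbound : ∀ f ∈ F, ∀ g ∈ F, ∀ y : X, ‖f y - g y‖ ≤ C)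
    (L τ : ℕ) (hL : 0 < L) (hτ : 0 < τ) (T : ℕ) (hT : T = L * τ)
    (x : ℕ → X) (d : ℕ → ℝ) (hd0 : ∀ t, 0 ≤ d t) (hdmono : Monotone d)
    (fhat : ℕ → X → V) :
    ∑ k ∈ Finset.Icc 1 L, ∑ i ∈ Finset.Icc 1 τ,
        width (Ft F x d fhat ((k - 1) * τ)) (x ((k - 1) * τ + i))
      ≤ 4 * (τ * C * Fintype.card X + 1)
        + 4 * Real.sqrt (2 * d T * Fintype.card X * T) := by
  set ts : ℕ → ℕ := fun t => ((t - 1) / τ) * τ with hts_def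
  -- basic facts about ts
  have key : ∀ t : ℕ, 1 ≤ t → ts t + 1 ≤ t ∧ t ≤ ts t + τ := by
    intro t ht
    have h1 := Nat.mod_add_div (t - 1) τ
    have h2 : (t - 1) % τ < τ := Nat.mod_lt _ hτ
    have h3 : ts t = τ * ((t - 1) / τ) := by simp only [hts_def]; exact Nat.mul_comm _ _
    generalize hm : τ * ((t - 1) / τ) = m at h1 h3
    generalize hr : (t - 1) % τ = r at h1 h2
    omega
  have hts_ep : ∀ k i : ℕ, 1 ≤ i → i ≤ τ → ts ((k - 1) * τ + i) = (k - 1) * τ := by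
    intro k i h1 h2
    have he : (k - 1) * τ + i - 1 = (i - 1) + τ * (k - 1) := by
      rw [Nat.mul_comm]; omega
    simp only [hts_def]
    rw [he, Nat.add_mul_div_left _ _ hτ, Nat.div_eq_of_lt (by omega), Nat.zero_add]
  have hep_le : ∀ t, 1 ≤ t → t ≤ T → (t - 1) / τ + 1 ≤ L := by
    intro t h1 h2
    have h3 : t - 1 < L * τ := hT ▸ (by omega : t - 1 < T)
    have h4 := (Nat.div_lt_iff_lt_mul hτ).mpr h3
    omega
  -- Step 1: reindex double sum as a single sum over Icc 1 T
  have hstep1 : ∑ k ∈ Finset.Icc 1 L, ∑ i ∈ Finset.Icc 1 τ,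
        width (Ft F x d fhat ((k - 1) * τ)) (x ((k - 1) * τ + i))
      = ∑ t ∈ Finset.Icc 1 T, width (Ft F x d fhat (ts t)) (x t) := by
    rw [← Finset.sum_product']
    refine Finset.sum_nbij' (fun p => (p.1 - 1) * τ + p.2)
      (fun t => ((t - 1) / τ + 1, t - ts t)) ?_ ?_ ?_ ?_ ?_
    · rintro ⟨k, i⟩ hp
      rw [Finset.mem_product, Finset.mem_Icc, Finset.mem_Icc] at hp
      dsimp only at hp ⊢
      rw [Finset.mem_Icc]
      have hmul : (k - 1) * τ + τ = k * τ := by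
        have hk1 : k - 1 + 1 = k := by omega
        calc (k - 1) * τ + τ = ((k - 1) + 1) * τ := (Nat.succ_mul _ _).symm
          _ = k * τ := by rw [hk1]
      constructor
      · exact le_trans hp.2.1 (Nat.le_add_left i _)
      · calc (k - 1) * τ + i ≤ (k - 1) * τ + τ := Nat.add_le_add_left hp.2.2 _
          _ = k * τ := hmul
          _ ≤ L * τ := Nat.mul_le_mul_right τ hp.1.2
          _ = T := hT.symm
    · intro t ht
      rw [Finset.mem_Icc] at ht
      rw [Finset.mem_product, Finset.mem_Icc, Finset.mem_Icc]
      have hk := hep_le t ht.1 ht.2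
      have h := key t ht.1
      exact ⟨⟨Nat.le_add_left 1 _, hk⟩, by omega, by omega⟩
    · rintro ⟨k, i⟩ hp
      rw [Finset.mem_product, Finset.mem_Icc, Finset.mem_Icc] at hp
      dsimp only at hp ⊢
      have h1 : ts ((k - 1) * τ + i) = (k - 1) * τ := hts_ep k i hp.2.1 hp.2.2
      have h2 : ((k - 1) * τ + i - 1) / τ = k - 1 := by
        have h3 := hts_ep k i hp.2.1 hp.2.2
        simp only [hts_def] at h3
        exact Nat.eq_of_mul_eq_mul_right hτ h3
      rw [h1, h2, Prod.mk.injEq]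
      refine ⟨by omega, ?_⟩
      generalize (k - 1) * τ = m
      omega
    · intro t ht
      rw [Finset.mem_Icc] at ht
      have h := key t ht.1
      dsimp only
      have he : ((t - 1) / τ + 1 - 1) * τ = ts t := by
        simp only [hts_def, Nat.add_sub_cancel]
      rw [he]
      omega
    · rintro ⟨k, i⟩ hp
      rw [Finset.mem_product, Finset.mem_Icc, Finset.mem_Icc] at hp
      dsimp only at hp ⊢
      rw [hts_ep k i hp.2.1 hp.2.2]
  rw [hstep1]
  rw [← Finset.sum_filter_add_sum_filter_not (Finset.Icc 1 T)
    (fun t => nvisit x (ts t) (x t) < τ) (fun t => width (Ft F x d fhat (ts t)) (x t))]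
  set A := (Finset.Icc 1 T).filter (fun t => nvisit x (ts t) (x t) < τ) with hA
  set B := (Finset.Icc 1 T).filter (fun t => ¬ nvisit x (ts t) (x t) < τ) with hB
  -- Bound the A part
  have hAcard : (A.card : ℝ) ≤ 2 * τ * Fintype.card X := by
    have h1 : A.card = ∑ y : X, (A.filter (fun t => x t = y)).card :=
      Finset.card_eq_sum_card_fiberwise (fun t _ => Finset.mem_univ (x t))
    have h2 : ∀ y : X, (A.filter (fun t => x t = y)).card ≤ 2 * τ := by
      intro y
      have hmaps : ∀ t ∈ A.filter (fun t => x t = y),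
          (fun t => nvisit x t y) t ∈ Finset.range (2 * τ) := by
        intro t ht
        simp only [Finset.mem_filter] at ht
        have htA := ht.1
        simp only [hA, Finset.mem_filter, Finset.mem_Icc] at htA
        have hk := key t htA.1.1
        have hle := nvisit_le_add x (ts t) t y
        have hlt : nvisit x (ts t) (x t) < τ := htA.2
        rw [ht.2] at hlt
        simp only [Finset.mem_range]
        omega
      have hinj : Set.InjOn (fun t => nvisit x t y) ((A.filter (fun t => x t = y)) : Set ℕ) := by
        apply nvisit_injOn
        intro t ht
        simp only [Finset.mem_filter] at ht
        have htA := ht.1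
        simp only [hA, Finset.mem_filter, Finset.mem_Icc] at htA
        exact ⟨htA.1.1, ht.2⟩
      have := Finset.card_le_card_of_injOn _ hmaps hinj
      simpa using this
    have h3 : A.card ≤ Fintype.card X * (2 * τ) := by
      rw [h1]
      calc ∑ y : X, (A.filter (fun t => x t = y)).card ≤ ∑ _y : X, 2 * τ :=
            Finset.sum_le_sum (fun y _ => h2 y)
        _ = Fintype.card X * (2 * τ) := by
            rw [Finset.sum_const, smul_eq_mul, Finset.card_univ]
    calc (A.card : ℝ) ≤ ((Fintype.card X * (2 * τ) : ℕ) : ℝ) := Nat.cast_le.mpr h3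
      _ = 2 * τ * Fintype.card X := by push_cast; ring
  have hsumA : ∑ t ∈ A, width (Ft F x d fhat (ts t)) (x t) ≤ 2 * τ * C * Fintype.card X := by
    calc ∑ t ∈ A, width (Ft F x d fhat (ts t)) (x t) ≤ A.card • C :=
          Finset.sum_le_card_nsmul _ _ _
            (fun t _ => width_le_of_subset F C hC hbound (Ft_subset F x d fhat (ts t)) (x t))
      _ = A.card * C := nsmul_eq_mul _ _
      _ ≤ (2 * τ * Fintype.card X) * C := mul_le_mul_of_nonneg_right hAcard hC
      _ = 2 * τ * C * Fintype.card X := by ring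
  -- Bound the B part pointwise
  have hBpt : ∀ t ∈ B, width (Ft F x d fhat (ts t)) (x t)
      ≤ 2 * Real.sqrt (2 * d T) * (1 / Real.sqrt (nvisit x t (x t))) := by
    intro t ht
    simp only [hB, Finset.mem_filter, Finset.mem_Icc] at ht
    obtain ⟨⟨ht1, htT⟩, htn⟩ := ht
    push_neg at htn
    have hk := key t ht1
    have hpos : 0 < nvisit x (ts t) (x t) := lt_of_lt_of_le hτ htn
    obtain ⟨s, hs⟩ := Finset.card_pos.mp hpos
    rw [Finset.mem_filter] at hs
    have hw := width_Ft_le F x d fhat (ts t) (x t) s hs.1 hs.2 hpos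
    refine hw.trans ?_
    have hmono' : nvisit x (ts t) (x t) ≤ nvisit x t (x t) := nvisit_mono x (by omega) _
    have hup : nvisit x t (x t) ≤ 2 * nvisit x (ts t) (x t) := by
      have := nvisit_le_add x (ts t) t (x t)
      omega
    have hdle : d (ts t) ≤ d T := hdmono (by omega)
    have hn'pos : (0:ℝ) < (nvisit x (ts t) (x t) : ℝ) := by exact_mod_cast hpos
    have hntpos : (0:ℝ) < (nvisit x t (x t) : ℝ) := by
      exact_mod_cast lt_of_lt_of_le hpos hmono'
    have hdiv : d (ts t) / (nvisit x (ts t) (x t) : ℝ) ≤ 2 * d T / (nvisit x t (x t) : ℝ) := by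
      rw [div_le_div_iff₀ hn'pos hntpos]
      have hnt2 : (nvisit x t (x t) : ℝ) ≤ 2 * (nvisit x (ts t) (x t) : ℝ) := by
        exact_mod_cast hup
      nlinarith [mul_nonneg (sub_nonneg.mpr hdle) hntpos.le,
        mul_nonneg (hd0 T) (sub_nonneg.mpr hnt2)]
    calc 2 * Real.sqrt (d (ts t) / (nvisit x (ts t) (x t) : ℝ))
        ≤ 2 * Real.sqrt (2 * d T / (nvisit x t (x t) : ℝ)) := by
          have := Real.sqrt_le_sqrt hdiv
          linarith
      _ = 2 * Real.sqrt (2 * d T) * (1 / Real.sqrt (nvisit x t (x t))) := by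
          rw [Real.sqrt_div (by linarith [hd0 T] : (0:ℝ) ≤ 2 * d T)]
          ring
  -- the per-point bound function
  set c : X → ℕ := fun y => ((Finset.Icc 1 T).filter (fun t => x t = y)).card with hc
  set g : ℕ → ℝ := fun t =>
      if 1 ≤ nvisit x t (x t) then 1 / Real.sqrt (nvisit x t (x t)) else 0 with hg
  have hgnonneg : ∀ t, 0 ≤ g t := by
    intro t; rw [hg]; dsimp only; split <;> positivity
  have hBg : ∑ t ∈ B, (1 / Real.sqrt (nvisit x t (x t))) ≤ ∑ t ∈ Finset.Icc 1 T, g t := by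
    have h1 : ∑ t ∈ B, (1 / Real.sqrt (nvisit x t (x t))) = ∑ t ∈ B, g t := by
      apply Finset.sum_congr rfl
      intro t ht
      simp only [hB, Finset.mem_filter, Finset.mem_Icc] at ht
      have hpos : 1 ≤ nvisit x t (x t) := by
        have h1' : τ ≤ nvisit x (ts t) (x t) := Nat.le_of_not_lt ht.2
        have hm : nvisit x (ts t) (x t) ≤ nvisit x t (x t) :=
          nvisit_mono x (Nat.le_of_succ_le (key t ht.1.1).1) (x t)
        omega
      rw [hg]; dsimp only; rw [if_pos hpos]
    rw [h1, hB]
    apply Finset.sum_le_sum_of_subset_of_nonneg (Finset.filter_subset _ _)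
    intro t _ _
    exact hgnonneg t
  have hfib : ∑ t ∈ Finset.Icc 1 T, g t = ∑ y : X, ∑ t ∈ (Finset.Icc 1 T).filter (fun t => x t = y), g t :=
    (Finset.sum_fiberwise _ _ _).symm
  have hfiby : ∀ y : X, ∑ t ∈ (Finset.Icc 1 T).filter (fun t => x t = y), g t
      ≤ 2 * Real.sqrt (c y) := by
    intro y
    have hstep : ∑ t ∈ (Finset.Icc 1 T).filter (fun t => x t = y), g t
        = ∑ t ∈ ((Finset.Icc 1 T).filter (fun t => x t = y)).filter
            (fun t => 1 ≤ nvisit x t y), 1 / Real.sqrt (nvisit x t y) := by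
      rw [Finset.sum_filter ((fun t => 1 ≤ nvisit x t y))]
      apply Finset.sum_congr rfl
      intro t ht
      simp only [Finset.mem_filter] at ht
      rw [hg]; dsimp only; rw [ht.2]
    rw [hstep]
    set s' := ((Finset.Icc 1 T).filter (fun t => x t = y)).filter (fun t => 1 ≤ nvisit x t y)
      with hs'
    have hmem' : ∀ t ∈ s', 1 ≤ t ∧ x t = y := by
      intro t ht
      simp only [hs', Finset.mem_filter, Finset.mem_Icc] at ht
      exact ⟨ht.1.1.1, ht.1.2⟩
    have hio := nvisit_injOn x y s' hmem'
    have hinj : ∀ t₁ ∈ s', ∀ t₂ ∈ s', nvisit x t₁ y = nvisit x t₂ y → t₁ = t₂ :=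
      fun t₁ h₁ t₂ h₂ h => hio (Finset.mem_coe.mpr h₁) (Finset.mem_coe.mpr h₂) h
    have himg : s'.image (fun t => nvisit x t y) ⊆ Finset.Icc 1 (c y - 1) := by
      intro j hj
      rw [Finset.mem_image] at hj
      obtain ⟨t, ht, rfl⟩ := hj
      rw [Finset.mem_Icc]
      have ht' := ht
      simp only [hs', Finset.mem_filter, Finset.mem_Icc] at ht'
      refine ⟨ht'.2, ?_⟩
      have htsy : t ∈ (Finset.Icc 1 T).filter (fun t => x t = y) := by
        simp only [Finset.mem_filter, Finset.mem_Icc]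
        exact ht'.1
      have hsub : (Finset.Ico 1 t).filter (fun s => x s = y) ⊆
          ((Finset.Icc 1 T).filter (fun t => x t = y)).erase t := by
        intro u hu
        simp only [Finset.mem_filter, Finset.mem_Ico] at hu
        simp only [Finset.mem_erase, Finset.mem_filter, Finset.mem_Icc]
        have htT : t ≤ T := ht'.1.1.2
        exact ⟨by omega, ⟨by omega, hu.2⟩⟩
      have hcard := Finset.card_le_card hsub
      rw [Finset.card_erase_of_mem htsy] at hcard
      exact hcard
    calc ∑ t ∈ s', 1 / Real.sqrt (nvisit x t y)
        = ∑ j ∈ s'.image (fun t => nvisit x t y), 1 / Real.sqrt j :=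
          (Finset.sum_image (f := fun j : ℕ => 1 / Real.sqrt j) hinj).symm
      _ ≤ ∑ j ∈ Finset.Icc 1 (c y - 1), 1 / Real.sqrt j := by
          apply Finset.sum_le_sum_of_subset_of_nonneg himg
          intro j _ _; positivity
      _ ≤ 2 * Real.sqrt ((c y - 1 : ℕ) : ℝ) := sum_one_div_sqrt_le _
      _ ≤ 2 * Real.sqrt (c y) := by
          have hcast : ((c y - 1 : ℕ) : ℝ) ≤ (c y : ℝ) := by
            exact_mod_cast Nat.sub_le (c y) 1
          have := Real.sqrt_le_sqrt hcast
          linarith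
  have hTsum : ∑ y : X, ((c y : ℝ)) = (T : ℝ) := by
    have h := Finset.card_eq_sum_card_fiberwise
      (f := fun t => x t) (s := Finset.Icc 1 T) (t := Finset.univ) (fun t _ => Finset.mem_univ _)
    have h2 : (Finset.Icc 1 T).card = T := by rw [Nat.card_Icc]; omega
    rw [h2] at h
    exact_mod_cast h.symm
  have hcauchy : ∑ y : X, Real.sqrt (c y) ≤ Real.sqrt ((Fintype.card X : ℝ) * T) := by
    have hsum_nonneg : (0:ℝ) ≤ ∑ y : X, Real.sqrt (c y) :=
      Finset.sum_nonneg (fun y _ => Real.sqrt_nonneg _)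
    apply (Real.le_sqrt hsum_nonneg (by positivity)).mpr
    have hCS := Finset.sum_mul_sq_le_sq_mul_sq Finset.univ (fun _ : X => (1:ℝ))
      (fun y => Real.sqrt (c y))
    have he1 : ∑ _y : X, ((1:ℝ)) ^ 2 = (Fintype.card X : ℝ) := by simp
    have he2 : ∑ y : X, (Real.sqrt (c y)) ^ 2 = ∑ y : X, ((c y : ℝ)) :=
      Finset.sum_congr rfl (fun y _ => Real.sq_sqrt (Nat.cast_nonneg _))
    calc (∑ y : X, Real.sqrt (c y)) ^ 2
        = (∑ y : X, 1 * Real.sqrt (c y)) ^ 2 := by simp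
      _ ≤ (∑ _y : X, ((1:ℝ)) ^ 2) * ∑ y : X, (Real.sqrt (c y)) ^ 2 := hCS
      _ = (Fintype.card X : ℝ) * (T : ℝ) := by rw [he1, he2, hTsum]
  have hsumB : ∑ t ∈ B, width (Ft F x d fhat (ts t)) (x t)
      ≤ 2 * Real.sqrt (2 * d T) * (2 * Real.sqrt ((Fintype.card X : ℝ) * T)) := by
    calc ∑ t ∈ B, width (Ft F x d fhat (ts t)) (x t)
        ≤ ∑ t ∈ B, 2 * Real.sqrt (2 * d T) * (1 / Real.sqrt (nvisit x t (x t))) :=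
          Finset.sum_le_sum hBpt
      _ = 2 * Real.sqrt (2 * d T) * ∑ t ∈ B, (1 / Real.sqrt (nvisit x t (x t))) := by
          rw [Finset.mul_sum]
      _ ≤ 2 * Real.sqrt (2 * d T) * ∑ t ∈ Finset.Icc 1 T, g t := by
          apply mul_le_mul_of_nonneg_left hBg (by positivity)
      _ = 2 * Real.sqrt (2 * d T) * ∑ y : X, ∑ t ∈ (Finset.Icc 1 T).filter (fun t => x t = y), g t := by
          rw [hfib]
      _ ≤ 2 * Real.sqrt (2 * d T) * ∑ y : X, 2 * Real.sqrt (c y) := by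
          apply mul_le_mul_of_nonneg_left (Finset.sum_le_sum (fun y _ => hfiby y)) (by positivity)
      _ = 2 * Real.sqrt (2 * d T) * (2 * ∑ y : X, Real.sqrt (c y)) := by
          rw [← Finset.mul_sum]
      _ ≤ 2 * Real.sqrt (2 * d T) * (2 * Real.sqrt ((Fintype.card X : ℝ) * T)) := by
          apply mul_le_mul_of_nonneg_left (by linarith [hcauchy]) (by positivity)
  -- combine
  have hfinal2 : 2 * Real.sqrt (2 * d T) * (2 * Real.sqrt ((Fintype.card X : ℝ) * T))
      = 4 * Real.sqrt (2 * d T * Fintype.card X * T) := by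
    rw [show (2 : ℝ) * d T * (Fintype.card X : ℝ) * T = (2 * d T) * ((Fintype.card X : ℝ) * T) by ring]
    rw [Real.sqrt_mul (by linarith [hd0 T] : (0:ℝ) ≤ 2 * d T)]
    ring
  have hnn : (0:ℝ) ≤ (τ : ℝ) * C * (Fintype.card X : ℝ) := by positivity
  calc ∑ t ∈ A, width (Ft F x d fhat (ts t)) (x t)
        + ∑ t ∈ B, width (Ft F x d fhat (ts t)) (x t)
      ≤ 2 * τ * C * Fintype.card X
        + 2 * Real.sqrt (2 * d T) * (2 * Real.sqrt ((Fintype.card X : ℝ) * T)) :=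
        add_le_add hsumA hsumB
    _ ≤ 4 * (τ * C * Fintype.card X + 1) + 4 * Real.sqrt (2 * d T * Fintype.card X * T) := by
        rw [hfinal2]
        nlinarith [hnn]

end SumWidthsAux

/-- Theorem 3 (Bounding the sum of widths): for confidence sets
F_t := {f ∈ F : ‖f(x_i) − f̂_t(x_i)‖ ≤ √(d_t/n_t(x_i)) for all i < t with n_t(x_i) > 0}
built from a class F of uniformly C-bounded width, with episodes of length τ,
episode starts t_k = (k−1)τ and T = Lτ, the sum of the widths of F_{t_k} at the
visited points is at most 4(τC|X| + 1) + 4√(2 d_T |X| T). -/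
theorem sum_of_widths_le
    {X : Type*} [Fintype X] {V : Type*} [SeminormedAddCommGroup V] [NormedSpace ℝ V]
    (F : Set (X → V)) (hFne : F.Nonempty)
    (C : ℝ) (hC : 0 ≤ C)
    (hbound : ∀ f ∈ F, ∀ g ∈ F, ∀ y : X, ‖f y - g y‖ ≤ C)
    (L τ : ℕ) (hL : 0 < L) (hτ : 0 < τ) (T : ℕ) (hT : T = L * τ)
    (x : ℕ → X)
    (d : ℕ → ℝ) (hd0 : ∀ t, 0 ≤ d t) (hdmono : Monotone d)
    (fhat : ℕ → X → V) :
    (let nvisit : ℕ → X → ℕ :=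
        fun t y => ((Finset.Ico 1 t).filter (fun s => x s = y)).card
     let Ft : ℕ → Set (X → V) := fun t =>
        {f ∈ F | ∀ i ∈ Finset.Ico 1 t, 0 < nvisit t (x i) →
            ‖f (x i) - fhat t (x i)‖ ≤ Real.sqrt (d t / (nvisit t (x i) : ℝ))}
     let width : Set (X → V) → X → ℝ := fun G y =>
        sSup ((fun fg : (X → V) × (X → V) => ‖fg.1 y - fg.2 y‖) '' (G ×ˢ G))
     ∑ k ∈ Finset.Icc 1 L, ∑ i ∈ Finset.Icc 1 τ,
        width (Ft ((k - 1) * τ)) (x ((k - 1) * τ + i)))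
    ≤ 4 * (τ * C * Fintype.card X + 1)
        + 4 * Real.sqrt (2 * d T * Fintype.card X * T) := by
  exact SumWidthsAux.main F C hC hbound L τ hL hτ T hT x d hd0 hdmono fhat
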